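/- Let N ∈ ℕ. For y ∈ (0,1) set ζ(y) := √(1−y) + i√y (a unit complex number) and define the (N+1)×(N+1) matrix Ψ₀(y), indexed by n, m ∈ {0,…,N}, by (Ψ₀(y))_{n,m} := C(N, N−m)^{−1} · Σ over pairs (p,q) with 0 ≤ p ≤ n, 0 ≤ q ≤ N−n and p+q = m of C(n,p) C(N−n,q) ζ(y)^{2(q−p+n)−N}, where negative powers of ζ(y) are taken via ζ(y)^{−1} = \overline{ζ(y)}. Let K be the (N+1)×(N+1) matrix with K_{i,j} := K_j(i), and let Υ(y) be the diagonal matrix with Υ(y)_{j,j} := (−i)^{j} C(N,j) (√y)^{j} (√(1−y))^{N−j}. Then Ψ₀(y) = K Υ(y) K for every y ∈ (0,1). -/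

import Mathlib

open Matrix Set Polynomial

/-- Krawtchouk polynomial `K_n(x)` with parameter `p = 1/2` and `N` trials:
`K_n(x) = Σ_{s=0}^{n} ((−n)_s (−x)_s / ((−N)_s s!)) 2^s`. -/
noncomputable def kraw (N n : ℕ) (x : ℂ) : ℂ :=
  ∑ s ∈ Finset.range (n + 1),
    ((ascPochhammer ℂ s).eval (-(n : ℂ)) * (ascPochhammer ℂ s).eval (-x)
        / ((ascPochhammer ℂ s).eval (-(N : ℂ)) * (Nat.factorial s : ℂ))) * 2 ^ s

/-- `ζ(y) = √(1−y) + i√y`, a unit complex number for `y ∈ (0,1)`. -/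
noncomputable def zeta (y : ℝ) : ℂ :=
  (Real.sqrt (1 - y) : ℂ) + Complex.I * (Real.sqrt y : ℂ)

/-- The full spherical function of degree zero `Ψ₀(y)` for
`(SU(2)×SU(2), diag SU(2))` with `ℓ = N/2`. -/
noncomputable def Psi0 (N : ℕ) (y : ℝ) : Matrix (Fin (N + 1)) (Fin (N + 1)) ℂ :=
  Matrix.of fun n m =>
    ((N.choose (N - (m : ℕ)) : ℂ))⁻¹ *
      ∑ p ∈ Finset.range ((n : ℕ) + 1), ∑ q ∈ Finset.range (N - (n : ℕ) + 1),
        if p + q = (m : ℕ) then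
          (((n : ℕ).choose p : ℂ)) * (((N - (n : ℕ)).choose q : ℂ))
            * zeta y ^ (2 * ((q : ℤ) - (p : ℤ) + ((n : ℕ) : ℤ)) - (N : ℤ))
        else 0

/-- The Krawtchouk matrix `K_{i,j} = K_j(i)`. -/
noncomputable def Kmat (N : ℕ) : Matrix (Fin (N + 1)) (Fin (N + 1)) ℂ :=
  Matrix.of fun i j => kraw N (j : ℕ) (((i : ℕ) : ℂ))

/-- The diagonal matrix `Υ(y)_{j,j} = (−i)^j C(N,j) (√y)^j (√(1−y))^{N−j}`. -/
noncomputable def Upsilon (N : ℕ) (y : ℝ) : Matrix (Fin (N + 1)) (Fin (N + 1)) ℂ :=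
  Matrix.diagonal fun j =>
    (-Complex.I) ^ (j : ℕ) * (N.choose (j : ℕ) : ℂ)
      * (Real.sqrt y : ℂ) ^ (j : ℕ) * (Real.sqrt (1 - y) : ℂ) ^ (N - (j : ℕ))

/-! ### Auxiliary machinery: symmetric power matrices of 2×2 matrices -/

noncomputable def lin (a b : ℂ) : Polynomial ℂ := C a + C b * X

lemma natDegree_lin_le (a b : ℂ) : (lin a b).natDegree ≤ 1 := by
  unfold lin
  apply le_trans (natDegree_add_le _ _)
  simp only [natDegree_C, max_le_iff, Nat.zero_le, true_and]
  exact le_trans (natDegree_mul_le) (by simp)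

lemma natDegree_linpow (a b c d : ℂ) (i j : ℕ) :
    ((lin a b) ^ i * (lin c d) ^ j).natDegree ≤ i + j := by
  apply le_trans (natDegree_mul_le)
  gcongr <;> exact le_trans (natDegree_pow_le) (by
    simpa using Nat.mul_le_mul_left _ (natDegree_lin_le _ _))

/-- homogeneous substitution sum -/
noncomputable def S (U V : Polynomial ℂ) (d : ℕ) (F : Polynomial ℂ) : Polynomial ℂ :=
  ∑ k ∈ Finset.range (d + 1), C (F.coeff k) * U ^ k * V ^ (d - k)

lemma S_strip (U V : Polynomial ℂ) (a b : ℂ) (d : ℕ) (F : Polynomial ℂ)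
    (hF : F.natDegree ≤ d) :
    S U V (d + 1) (lin a b * F) = (C a * V + C b * U) * S U V d F := by
  have hcoeff : ∀ k, (lin a b * F).coeff k = a * F.coeff k + b * (X * F).coeff k := by
    intro k
    simp [lin, add_mul, coeff_add, coeff_C_mul, mul_assoc]
  unfold S
  simp only [hcoeff, map_add, add_mul]
  rw [Finset.sum_add_distrib]
  congr 1
  · rw [Finset.sum_range_succ]
    have hz : F.coeff (d + 1) = 0 :=
      coeff_eq_zero_of_natDegree_lt (lt_of_le_of_lt hF (Nat.lt_succ_self d))
    rw [hz]
    simp only [_root_.map_mul, map_zero, mul_zero, zero_mul, add_zero]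
    rw [Finset.mul_sum]
    apply Finset.sum_congr rfl
    intro k hk
    have hk' : k ≤ d := Nat.lt_succ_iff.mp (Finset.mem_range.mp hk)
    have h : d + 1 - k = (d - k) + 1 := by omega
    rw [h, pow_succ]
    ring
  · rw [Finset.sum_range_succ']
    simp only [coeff_X_mul]
    have h0 : (X * F).coeff 0 = 0 := by simp [coeff_X_mul_zero]
    rw [h0]
    simp only [_root_.map_mul, map_zero, mul_zero, zero_mul, add_zero]
    rw [Finset.mul_sum]
    apply Finset.sum_congr rfl
    intro k hk
    have h : d + 1 - (k + 1) = d - k := by omega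
    rw [h, pow_succ]
    ring

lemma S_pow (U V : Polynomial ℂ) (a b c d : ℂ) :
    ∀ i j : ℕ, S U V (i + j) ((lin a b) ^ i * (lin c d) ^ j)
      = (C a * V + C b * U) ^ i * (C c * V + C d * U) ^ j := by
  intro i
  induction i with
  | zero =>
    intro j
    induction j with
    | zero => simp [S]
    | succ j ih =>
      have h1 : (lin a b) ^ 0 * (lin c d) ^ (j + 1) = lin c d * ((lin a b) ^ 0 * (lin c d) ^ j) := by
        ring
      have h2 : (0 : ℕ) + (j + 1) = (0 + j) + 1 := by omega
      rw [h2, h1, S_strip U V c d (0 + j) _ (by simpa using natDegree_linpow a b c d 0 j), ih]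
      ring
  | succ i ih =>
    intro j
    have h1 : (lin a b) ^ (i + 1) * (lin c d) ^ j = lin a b * ((lin a b) ^ i * (lin c d) ^ j) := by
      ring
    have h2 : (i + 1) + j = (i + j) + 1 := by omega
    rw [h2, h1, S_strip U V a b (i + j) _ (natDegree_linpow a b c d i j), ih]
    ring

noncomputable def Pm (N : ℕ) (a b c d : ℂ) : Matrix (Fin (N + 1)) (Fin (N + 1)) ℂ :=
  Matrix.of fun n m => ((lin a b) ^ (n : ℕ) * (lin c d) ^ (N - (n : ℕ))).coeff m

theorem Pm_mul (N : ℕ) (a b c d a' b' c' d' : ℂ) :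
    Pm N a b c d * Pm N a' b' c' d'
      = Pm N (a * c' + b * a') (a * d' + b * b') (c * c' + d * a') (c * d' + d * b') := by
  ext n m
  rw [Matrix.mul_apply]
  simp only [Pm, Matrix.of_apply]
  have hn : (n : ℕ) ≤ N := Nat.lt_succ_iff.mp n.isLt
  rw [Fin.sum_univ_eq_sum_range
    (fun k => (((lin a b) ^ (n : ℕ) * (lin c d) ^ (N - (n : ℕ))).coeff k)
      * (((lin a' b') ^ k * (lin c' d') ^ (N - k)).coeff (m : ℕ)))]
  have step2 : ∑ k ∈ Finset.range (N + 1),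
      (((lin a b) ^ (n : ℕ) * (lin c d) ^ (N - (n : ℕ))).coeff k)
        * (((lin a' b') ^ k * (lin c' d') ^ (N - k)).coeff (m : ℕ))
      = (S (lin a' b') (lin c' d') N ((lin a b) ^ (n : ℕ) * (lin c d) ^ (N - (n : ℕ)))).coeff m := by
    unfold S
    rw [finset_sum_coeff]
    apply Finset.sum_congr rfl
    intro k _
    rw [mul_assoc, coeff_C_mul]
  rw [step2]
  have hNn : (n : ℕ) + (N - (n : ℕ)) = N := by omega
  have hS := S_pow (lin a' b') (lin c' d') a b c d (n : ℕ) (N - (n : ℕ))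
  rw [hNn] at hS
  rw [hS]
  have hU1 : C a * lin c' d' + C b * lin a' b' = lin (a * c' + b * a') (a * d' + b * b') := by
    simp only [lin, map_add, _root_.map_mul]
    ring
  have hU2 : C c * lin c' d' + C d * lin a' b' = lin (c * c' + d * a') (c * d' + d * b') := by
    simp only [lin, map_add, _root_.map_mul]
    ring
  rw [hU1, hU2]

lemma coeff_linpow (a b : ℂ) (n p : ℕ) :
    ((lin a b) ^ n).coeff p
      = if p ≤ n then (n.choose p : ℂ) * a ^ (n - p) * b ^ p else 0 := by
  unfold lin
  rw [add_comm, add_pow]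
  rw [finset_sum_coeff]
  have hterm : ∀ k ∈ Finset.range (n + 1),
      ((C b * X) ^ k * C a ^ (n - k) * (n.choose k : Polynomial ℂ)).coeff p
        = if p = k then (n.choose k : ℂ) * a ^ (n - k) * b ^ k else 0 := by
    intro k _
    rw [mul_pow, ← C_pow, ← C_pow, ← Polynomial.C_eq_natCast]
    have h : C (b ^ k) * X ^ k * C (a ^ (n - k)) * C ((n.choose k : ℂ))
        = C ((n.choose k : ℂ) * a ^ (n - k) * b ^ k) * X ^ k := by
      simp only [_root_.map_mul]; ring
    rw [h, coeff_C_mul, coeff_X_pow]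
    split <;> simp
  rw [Finset.sum_congr rfl hterm, Finset.sum_ite_eq (Finset.range (n + 1)) p
    (fun k => (n.choose k : ℂ) * a ^ (n - k) * b ^ k)]
  simp [Nat.lt_succ_iff]

lemma coeff_lin_mul_pow (a b c d : ℂ) (N n m : ℕ) :
    ((lin a b) ^ n * (lin c d) ^ (N - n)).coeff m
      = ∑ p ∈ Finset.range (n + 1), ∑ q ∈ Finset.range (N - n + 1),
          if p + q = m then
            (n.choose p : ℂ) * ((N - n).choose q : ℂ) * (a ^ (n - p) * b ^ p)
              * (c ^ (N - n - q) * d ^ q)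
          else 0 := by
  set f : ℕ → ℂ := fun p => ((lin a b) ^ n).coeff p with hf
  set g : ℕ → ℂ := fun q => ((lin c d) ^ (N - n)).coeff q with hg
  have hL : ((lin a b) ^ n * (lin c d) ^ (N - n)).coeff m
      = ∑ x ∈ Finset.HasAntidiagonal.antidiagonal m, f x.1 * g x.2 := by
    rw [coeff_mul]
  have hR : ∑ p ∈ Finset.range (n + 1), ∑ q ∈ Finset.range (N - n + 1),
        (if p + q = m then
          (n.choose p : ℂ) * ((N - n).choose q : ℂ) * (a ^ (n - p) * b ^ p)
            * (c ^ (N - n - q) * d ^ q) else 0)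
      = ∑ x ∈ (Finset.range (n + 1) ×ˢ Finset.range (N - n + 1)).filter
          (fun x => x.1 + x.2 = m), f x.1 * g x.2 := by
    rw [Finset.sum_filter, Finset.sum_product]
    apply Finset.sum_congr rfl
    intro p hp
    apply Finset.sum_congr rfl
    intro q hq
    have hp' : p ≤ n := Nat.lt_succ_iff.mp (Finset.mem_range.mp hp)
    have hq' : q ≤ N - n := Nat.lt_succ_iff.mp (Finset.mem_range.mp hq)
    have hfp : f p = (n.choose p : ℂ) * a ^ (n - p) * b ^ p := by
      rw [hf]; simp only []; rw [coeff_linpow, if_pos hp']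
    have hgq : g q = ((N - n).choose q : ℂ) * c ^ (N - n - q) * d ^ q := by
      rw [hg]; simp only []; rw [coeff_linpow, if_pos hq']
    rw [hfp, hgq]
    split <;> ring
  rw [hL, hR]
  apply (Finset.sum_subset ?_ ?_).symm
  · intro x hx
    rw [Finset.mem_filter] at hx
    rw [Finset.HasAntidiagonal.mem_antidiagonal]
    exact hx.2
  · intro x hx hx'
    rw [Finset.HasAntidiagonal.mem_antidiagonal] at hx
    rw [Finset.mem_filter, Finset.mem_product, Finset.mem_range, Finset.mem_range] at hx'
    have h : ¬(x.1 < n + 1) ∨ ¬(x.2 < N - n + 1) := by tauto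
    rcases h with h | h
    · have hz : f x.1 = 0 := by
        rw [hf]; simp only []; rw [coeff_linpow, if_neg (by omega)]
      rw [hz, zero_mul]
    · have hz : g x.2 = 0 := by
        rw [hg]; simp only []; rw [coeff_linpow, if_neg (by omega)]
      rw [hz, mul_zero]

/-! ### The Krawtchouk bridge -/

noncomputable def kterm (N n m : ℕ) (s : ℕ) : ℂ :=
  (n.choose s : ℂ) * (-2) ^ s * (if s ≤ m then ((N - s).choose (m - s) : ℂ) else 0)

lemma kraw_side (N n m : ℕ) (hm : m ≤ N) :
    (N.choose m : ℂ) * kraw N m (n : ℂ) = ∑ s ∈ Finset.range (N + 1), kterm N n m s := by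
  unfold kraw
  rw [Finset.mul_sum]
  rw [← Finset.sum_subset (Finset.range_subset_range.mpr (by omega : m + 1 ≤ N + 1)) ?vanish]
  case vanish =>
    intro s _ hs
    have hs' : ¬ (s ≤ m) := by
      simp only [Finset.mem_range] at hs; omega
    rw [kterm, if_neg hs', mul_zero]
  apply Finset.sum_congr rfl
  intro s hs
  have hsm : s ≤ m := Nat.lt_succ_iff.mp (Finset.mem_range.mp hs)
  have hsN : s ≤ N := le_trans hsm hm
  unfold kterm
  rw [if_pos hsm]
  rw [ascPochhammer_eval_neg_eq_descPochhammer, ascPochhammer_eval_neg_eq_descPochhammer,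
    ascPochhammer_eval_neg_eq_descPochhammer, descPochhammer_eval_eq_descFactorial,
    descPochhammer_eval_eq_descFactorial, descPochhammer_eval_eq_descFactorial,
    Nat.descFactorial_eq_factorial_mul_choose, Nat.descFactorial_eq_factorial_mul_choose,
    Nat.descFactorial_eq_factorial_mul_choose]
  have hC : (N.choose m : ℂ) * (m.choose s : ℂ)
      = (N.choose s : ℂ) * ((N - s).choose (m - s) : ℂ) := by
    exact_mod_cast congrArg (Nat.cast (R := ℂ)) (Nat.choose_mul (n := N) hsm)
  have h1 : ((-1 : ℂ)) ^ s ≠ 0 := pow_ne_zero _ (by norm_num)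
  have h2 : ((Nat.factorial s : ℂ)) ≠ 0 := Nat.cast_ne_zero.mpr (Nat.factorial_ne_zero s)
  have h3 : ((N.choose s : ℂ)) ≠ 0 := Nat.cast_ne_zero.mpr (Nat.choose_pos hsN).ne'
  push_cast
  field_simp
  have hneg : ((-2 : ℂ)) ^ s = (-1) ^ s * 2 ^ s := by
    rw [← neg_one_mul, mul_pow]
  linear_combination ((-1:ℂ)^s * (n.choose s:ℂ) * 2^s) * hC
    - ((n.choose s:ℂ) * ((N.choose s):ℂ) * (((N-s).choose (m-s)):ℂ)) * hneg

lemma coeff_side (N n m : ℕ) (hn : n ≤ N) :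
    ((lin 1 (-1)) ^ n * (lin 1 1) ^ (N - n)).coeff m
      = ∑ s ∈ Finset.range (N + 1), kterm N n m s := by
  have hlin : lin 1 (-1) = C (-2) * X + lin 1 1 := by
    simp only [lin, C_neg, C_1, map_ofNat]
    ring
  have hexp : (lin 1 (-1)) ^ n * (lin 1 1) ^ (N - n)
      = ∑ s ∈ Finset.range (n + 1),
          C ((n.choose s : ℂ) * (-2) ^ s) * ((lin 1 1) ^ (N - s) * X ^ s) := by
    rw [hlin, add_pow, Finset.sum_mul]
    apply Finset.sum_congr rfl
    intro k hk
    have hk' : k ≤ n := Nat.lt_succ_iff.mp (Finset.mem_range.mp hk)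
    have hpow : (lin 1 1) ^ (n - k) * (lin 1 1) ^ (N - n) = (lin 1 1) ^ (N - k) := by
      rw [← pow_add]
      congr 1
      omega
    rw [mul_pow, ← C_pow, ← Polynomial.C_eq_natCast]
    calc C ((-2:ℂ) ^ k) * X ^ k * lin 1 1 ^ (n - k) * C ((n.choose k:ℂ)) * lin 1 1 ^ (N - n)
        = C ((-2:ℂ) ^ k) * C ((n.choose k:ℂ)) * ((lin 1 1 ^ (n-k) * lin 1 1 ^ (N-n)) * X ^ k) := by
          ring
      _ = C ((n.choose k : ℂ) * (-2) ^ k) * (lin 1 1 ^ (N - k) * X ^ k) := by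
          rw [hpow, ← _root_.map_mul]
          ring_nf
  rw [hexp, finset_sum_coeff]
  have hone : lin 1 1 = 1 + X := by simp only [lin, C_1]; ring
  have hterm : ∀ s ∈ Finset.range (n + 1),
      (C ((n.choose s : ℂ) * (-2) ^ s) * ((lin 1 1) ^ (N - s) * X ^ s)).coeff m
        = kterm N n m s := by
    intro s _
    rw [coeff_C_mul, coeff_mul_X_pow', hone, kterm]
    split
    · rw [coeff_one_add_X_pow]
    · rw [mul_zero]
  rw [Finset.sum_congr rfl hterm]
  apply Finset.sum_subset (Finset.range_subset_range.mpr (by omega : n + 1 ≤ N + 1))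
  intro s _ hs
  have h : n < s := by simp only [Finset.mem_range] at hs; omega
  rw [kterm, Nat.choose_eq_zero_of_lt h]
  simp

/-! ### Identification of the matrices -/

noncomputable def Dinv (N : ℕ) : Matrix (Fin (N + 1)) (Fin (N + 1)) ℂ :=
  Matrix.diagonal fun m => ((N.choose (m : ℕ) : ℂ))⁻¹

lemma choose_ne_zero' (N : ℕ) (m : Fin (N + 1)) : ((N.choose (m : ℕ) : ℂ)) ≠ 0 :=
  Nat.cast_ne_zero.mpr (Nat.choose_pos (Nat.lt_succ_iff.mp m.isLt)).ne'

lemma Kmat_eq (N : ℕ) : Kmat N = Pm N 1 (-1) 1 1 * Dinv N := by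
  ext n m
  rw [Matrix.mul_apply]
  unfold Dinv
  rw [Finset.sum_eq_single m (fun k _ hk => by
      rw [Matrix.diagonal_apply_ne _ hk, mul_zero]) (by simp)]
  rw [Matrix.diagonal_apply_eq]
  have hn : (n : ℕ) ≤ N := Nat.lt_succ_iff.mp n.isLt
  have hm : (m : ℕ) ≤ N := Nat.lt_succ_iff.mp m.isLt
  have hPm : Pm N 1 (-1) 1 1 n m = (N.choose (m : ℕ) : ℂ) * kraw N (m : ℕ) ((n : ℕ) : ℂ) := by
    show ((lin 1 (-1)) ^ (n : ℕ) * (lin 1 1) ^ (N - (n : ℕ))).coeff (m : ℕ) = _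
    rw [coeff_side N (n : ℕ) (m : ℕ) hn, kraw_side N (n : ℕ) (m : ℕ) hm]
  rw [hPm]
  rw [mul_comm ((N.choose (m : ℕ) : ℂ)) _, mul_assoc,
    mul_inv_cancel₀ (choose_ne_zero' N m), mul_one]
  rfl

lemma Pm_diag (N : ℕ) (β γ : ℂ) :
    Pm N 0 β γ 0 = Matrix.diagonal (fun n : Fin (N + 1) => β ^ (n : ℕ) * γ ^ (N - (n : ℕ))) := by
  ext n m
  show ((lin 0 β) ^ (n : ℕ) * (lin γ 0) ^ (N - (n : ℕ))).coeff (m : ℕ) = _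
  have h1 : lin 0 β = C β * X := by simp [lin]
  have h2 : lin γ 0 = C γ := by simp [lin]
  rw [h1, h2, mul_pow, ← C_pow, ← C_pow]
  have h3 : C (β ^ (n : ℕ)) * X ^ (n : ℕ) * C (γ ^ (N - (n : ℕ)))
      = C (β ^ (n : ℕ) * γ ^ (N - (n : ℕ))) * X ^ (n : ℕ) := by
    simp only [_root_.map_mul]; ring
  rw [h3, coeff_C_mul, coeff_X_pow]
  rcases eq_or_ne n m with h | h
  · subst h
    simp
  · rw [Matrix.diagonal_apply_ne _ h, if_neg (by
      intro hc
      exact h (Fin.ext (by omega)).symm ), mul_zero]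

/-! ### The main theorem -/

/-- Theorem 3.2 of the paper: `Ψ₀(y) = K Υ(y) K` for all `y ∈ (0,1)`. -/
theorem stmt9 (N : ℕ) :
    ∀ y ∈ Set.Ioo (0:ℝ) 1, Psi0 N y = Kmat N * Upsilon N y * Kmat N := by
  intro y hy
  obtain ⟨hy0, hy1⟩ := hy
  set t : ℂ := (Real.sqrt y : ℂ) with ht
  set s : ℂ := (Real.sqrt (1 - y) : ℂ) with hs
  have ht2 : t ^ 2 = (y : ℂ) := by
    rw [ht, ← Complex.ofReal_pow, Real.sq_sqrt (le_of_lt hy0)]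
  have hs2 : s ^ 2 = ((1 - y : ℝ) : ℂ) := by
    rw [hs, ← Complex.ofReal_pow, Real.sq_sqrt (by linarith)]
  have hzeta : zeta y = s + Complex.I * t := rfl
  have hunit : (s + Complex.I * t) * (s - Complex.I * t) = 1 := by
    have hI : Complex.I ^ 2 = -1 := Complex.I_sq
    have : (s + Complex.I * t) * (s - Complex.I * t) = s ^ 2 - Complex.I ^ 2 * t ^ 2 := by ring
    rw [this, hI, hs2, ht2]
    push_cast
    ring
  have hzne : zeta y ≠ 0 := by
    rw [hzeta]
    intro hc
    rw [hc, zero_mul] at hunit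
    exact one_ne_zero hunit.symm
  have hinv : (zeta y)⁻¹ = s - Complex.I * t := by
    rw [hzeta]
    exact inv_eq_of_mul_eq_one_right hunit
  have hn' : ∀ n : Fin (N + 1), (n : ℕ) ≤ N := fun n => Nat.lt_succ_iff.mp n.isLt
  -- Step 1 : Dinv * Upsilon = Pm N 0 (-(I*t)) s 0
  have hDU : Dinv N * Upsilon N y = Pm N 0 (-(Complex.I * t)) s 0 := by
    rw [Pm_diag]
    unfold Dinv Upsilon
    rw [Matrix.diagonal_mul_diagonal]
    ext j k
    rw [Matrix.diagonal_apply, Matrix.diagonal_apply]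
    split
    next hjk =>
      have hne := choose_ne_zero' N j
      have hpow : (-(Complex.I * t)) ^ (j : ℕ) = (-Complex.I) ^ (j : ℕ) * t ^ (j : ℕ) := by
        rw [← neg_mul, mul_pow]
      rw [hpow, ← ht, ← hs]
      field_simp
    next _ => rfl
  -- Step 2 : the triple product
  have htriple : Pm N 1 (-1) 1 1 * Pm N 0 (-(Complex.I * t)) s 0 * Pm N 1 (-1) 1 1
      = Pm N (zeta y) ((zeta y)⁻¹) ((zeta y)⁻¹) (zeta y) := by
    rw [Pm_mul, Pm_mul, hinv, hzeta]
    congr 1 <;> ring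
  -- Step 3 : Psi0 = Pm ζ ζ⁻¹ ζ⁻¹ ζ * Dinv
  have hPsi : Psi0 N y = Pm N (zeta y) ((zeta y)⁻¹) ((zeta y)⁻¹) (zeta y) * Dinv N := by
    ext n m
    unfold Dinv
    rw [Matrix.mul_diagonal]
    have hm : (m : ℕ) ≤ N := hn' m
    have hnn : (n : ℕ) ≤ N := hn' n
    show Psi0 N y n m = Pm N (zeta y) ((zeta y)⁻¹) ((zeta y)⁻¹) (zeta y) n m
        * ((N.choose (m : ℕ) : ℂ))⁻¹
    have hPm : Pm N (zeta y) ((zeta y)⁻¹) ((zeta y)⁻¹) (zeta y) n m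
        = ∑ p ∈ Finset.range ((n : ℕ) + 1), ∑ q ∈ Finset.range (N - (n : ℕ) + 1),
            if p + q = (m : ℕ) then
              (((n : ℕ).choose p : ℂ)) * (((N - (n : ℕ)).choose q : ℂ))
                * zeta y ^ (2 * ((q : ℤ) - (p : ℤ) + ((n : ℕ) : ℤ)) - (N : ℤ))
            else 0 := by
      show ((lin (zeta y) ((zeta y)⁻¹)) ^ (n : ℕ)
          * (lin ((zeta y)⁻¹) (zeta y)) ^ (N - (n : ℕ))).coeff (m : ℕ) = _
      rw [coeff_lin_mul_pow]
      apply Finset.sum_congr rfl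
      intro p hp
      apply Finset.sum_congr rfl
      intro q hq
      have hp' : p ≤ (n : ℕ) := Nat.lt_succ_iff.mp (Finset.mem_range.mp hp)
      have hq' : q ≤ N - (n : ℕ) := Nat.lt_succ_iff.mp (Finset.mem_range.mp hq)
      split
      case isFalse => rfl
      case isTrue h =>
        have hzp : zeta y ^ ((n : ℕ) - p) * (zeta y)⁻¹ ^ p
              * (((zeta y)⁻¹) ^ (N - (n : ℕ) - q) * zeta y ^ q)
            = zeta y ^ (2 * ((q : ℤ) - (p : ℤ) + ((n : ℕ) : ℤ)) - (N : ℤ)) := by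
          rw [← zpow_natCast (zeta y) ((n : ℕ) - p), ← zpow_natCast (zeta y) q,
            ← zpow_natCast ((zeta y)⁻¹) p, ← zpow_natCast ((zeta y)⁻¹) (N - (n : ℕ) - q),
            _root_.inv_zpow, _root_.inv_zpow, ← _root_.zpow_neg, ← _root_.zpow_neg,
            ← zpow_add₀ hzne, ← zpow_add₀ hzne, ← zpow_add₀ hzne]
          congr 1
          omega
        rw [← hzp]
        ring
    rw [hPm]
    show ((N.choose (N - (m : ℕ)) : ℂ))⁻¹ * _ = _
    rw [Nat.choose_symm hm]
    ring
  -- Assemble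
  rw [Kmat_eq N, hPsi,
    mul_assoc (Pm N 1 (-1) 1 1) (Dinv N) (Upsilon N y), hDU,
    ← mul_assoc (Pm N 1 (-1) 1 1 * Pm N 0 (-(Complex.I * t)) s 0) (Pm N 1 (-1) 1 1) (Dinv N),
    htriple]
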